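/- arXiv:1101.0015 — 4 statements merged into one kernel-verified Lean document; each statement's English description precedes it below -/
import Mathlib

section
/- For X = (x_{ij}) ∈ SL_3 with adjugate X̂ = (x̂_{ij}), the eight functions P_1 = x_{11}, P_2 = x_{13}, P_3 = x_{21}, P_4 = -x̂_{23}, P_5 = -x̂_{31}, P_6 = -x̂_{33}, P_7 = x_{13}x_{31} - x_{21}x_{23}, P_8 = x̂_{13}x̂_{31} - x̂_{21}x̂_{23} have linearly independent gradients at some point of SL_3; in particular there exists X ∈ SL_3 at which the differentials of P_1,...,P_8 span an 8-dimensional space (equal to the dimension of SL_3). -/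
open Matrix

/-- The initial extended cluster of the Cremmer–Gervais cluster structure on `SL₃`,
as functions of the matrix entries (indices are 0-based):
`P₁ = x₁₁`, `P₂ = x₁₃`, `P₃ = x₂₁`, `P₄ = -x̂₂₃`, `P₅ = -x̂₃₁`, `P₆ = -x̂₃₃`,
`P₇ = x₁₃x₃₁ - x₂₁x₂₃`, `P₈ = x̂₁₃x̂₃₁ - x̂₂₁x̂₂₃`, where `X̂` is the adjugate of `X`. -/
def PCG : Fin 8 → (Fin 3 → Fin 3 → ℂ) → ℂ :=
  ![fun X => Matrix.of X 0 0,
    fun X => Matrix.of X 0 2,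
    fun X => Matrix.of X 1 0,
    fun X => -((Matrix.of X).adjugate 1 2),
    fun X => -((Matrix.of X).adjugate 2 0),
    fun X => -((Matrix.of X).adjugate 2 2),
    fun X => Matrix.of X 0 2 * Matrix.of X 2 0 - Matrix.of X 1 0 * Matrix.of X 1 2,
    fun X => (Matrix.of X).adjugate 0 2 * (Matrix.of X).adjugate 2 0 -
      (Matrix.of X).adjugate 1 0 * (Matrix.of X).adjugate 1 2]

/-- The tangent space to `SL₃` at an invertible matrix `X`:
matrices `Y` with `tr(X⁻¹ Y) = 0`. -/
abbrev Ecg := Fin 3 → Fin 3 → ℂ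
noncomputable def ev (a b : Fin 3) : Ecg →L[ℂ] ℂ :=
  (ContinuousLinearMap.proj b : (Fin 3 → ℂ) →L[ℂ] ℂ).comp
    (ContinuousLinearMap.proj a : Ecg →L[ℂ] (Fin 3 → ℂ))
lemma hasF_ev (a b : Fin 3) (X : Ecg) : HasFDerivAt (fun Y : Ecg => Y a b) (ev a b) X := by
  have h : (fun Y : Ecg => Y a b) = ⇑(ev a b) := rfl
  rw [h]; exact (ev a b).hasFDerivAt
lemma ev_apply (a b : Fin 3) (Y : Ecg) : ev a b Y = Y a b := rfl

def Xcg : Ecg := ![![1,0,1],![2,1,0],![1,0,2]]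

lemma fd0 (v : Ecg) : fderiv ℂ (PCG 0) Xcg v = v 0 0 := by
  have e : PCG 0 = fun Y : Ecg => Y 0 0 := by funext Y; rfl
  rw [e, (hasF_ev 0 0 Xcg).fderiv, ev_apply]

lemma fd1 (v : Ecg) : fderiv ℂ (PCG 1) Xcg v = v 0 2 := by
  have e : PCG 1 = fun Y : Ecg => Y 0 2 := by funext Y; rfl
  rw [e, (hasF_ev 0 2 Xcg).fderiv, ev_apply]

lemma fd2 (v : Ecg) : fderiv ℂ (PCG 2) Xcg v = v 1 0 := by
  have e : PCG 2 = fun Y : Ecg => Y 1 0 := by funext Y; rfl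
  rw [e, (hasF_ev 1 0 Xcg).fderiv, ev_apply]

lemma fd3 (v : Ecg) : fderiv ℂ (PCG 3) Xcg v = v 1 2 - v 1 0 - 2 * v 0 2 := by
  have e : PCG 3 = fun Y : Ecg => Y 0 0 * Y 1 2 - Y 0 2 * Y 1 0 := by
    funext Y; show -((Matrix.of Y).adjugate 1 2) = _
    simp [Matrix.adjugate_fin_three]; try ring
  erw [e, (((hasF_ev 0 0 Xcg).mul (hasF_ev 1 2 Xcg)).sub
    ((hasF_ev 0 2 Xcg).mul (hasF_ev 1 0 Xcg))).fderiv]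
  simp [ev_apply, Xcg]
  try ring

lemma fd4 (v : Ecg) : fderiv ℂ (PCG 4) Xcg v = v 2 0 + v 1 1 - 2 * v 2 1 := by
  have e : PCG 4 = fun Y : Ecg => Y 1 1 * Y 2 0 - Y 1 0 * Y 2 1 := by
    funext Y; show -((Matrix.of Y).adjugate 2 0) = _
    simp [Matrix.adjugate_fin_three]; try ring
  erw [e, (((hasF_ev 1 1 Xcg).mul (hasF_ev 2 0 Xcg)).sub
    ((hasF_ev 1 0 Xcg).mul (hasF_ev 2 1 Xcg))).fderiv]
  simp [ev_apply, Xcg]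
  try ring

lemma fd5 (v : Ecg) : fderiv ℂ (PCG 5) Xcg v = 2 * v 0 1 - v 1 1 - v 0 0 := by
  have e : PCG 5 = fun Y : Ecg => Y 0 1 * Y 1 0 - Y 0 0 * Y 1 1 := by
    funext Y; show -((Matrix.of Y).adjugate 2 2) = _
    simp [Matrix.adjugate_fin_three]; try ring
  erw [e, (((hasF_ev 0 1 Xcg).mul (hasF_ev 1 0 Xcg)).sub
    ((hasF_ev 0 0 Xcg).mul (hasF_ev 1 1 Xcg))).fderiv]
  simp [ev_apply, Xcg]
  try ring

lemma fd6 (v : Ecg) : fderiv ℂ (PCG 6) Xcg v = v 2 0 + v 0 2 - 2 * v 1 2 := by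
  have e : PCG 6 = fun Y : Ecg => Y 0 2 * Y 2 0 - Y 1 0 * Y 1 2 := by
    funext Y; rfl
  erw [e, (((hasF_ev 0 2 Xcg).mul (hasF_ev 2 0 Xcg)).sub
    ((hasF_ev 1 0 Xcg).mul (hasF_ev 1 2 Xcg))).fderiv]
  simp [ev_apply, Xcg]
  try ring

lemma fd7 (v : Ecg) : fderiv ℂ (PCG 7) Xcg v =
    2 * v 1 1 + 9 * v 0 2 - 2 * v 2 1 + v 2 0 + 4 * v 2 2 + 8 * v 1 0 - 6 * v 1 2 := by
  have e : PCG 7 = fun Y : Ecg =>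
      (Y 0 1 * Y 1 2 - Y 0 2 * Y 1 1) * (Y 1 0 * Y 2 1 - Y 1 1 * Y 2 0) -
      (Y 1 2 * Y 2 0 - Y 1 0 * Y 2 2) * (Y 0 2 * Y 1 0 - Y 0 0 * Y 1 2) := by
    funext Y
    show (Matrix.of Y).adjugate 0 2 * (Matrix.of Y).adjugate 2 0 -
      (Matrix.of Y).adjugate 1 0 * (Matrix.of Y).adjugate 1 2 = _
    simp [Matrix.adjugate_fin_three]; try ring
  erw [e, (((((hasF_ev 0 1 Xcg).mul (hasF_ev 1 2 Xcg)).sub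
      ((hasF_ev 0 2 Xcg).mul (hasF_ev 1 1 Xcg))).mul
     (((hasF_ev 1 0 Xcg).mul (hasF_ev 2 1 Xcg)).sub
      ((hasF_ev 1 1 Xcg).mul (hasF_ev 2 0 Xcg)))).sub
    ((((hasF_ev 1 2 Xcg).mul (hasF_ev 2 0 Xcg)).sub
      ((hasF_ev 1 0 Xcg).mul (hasF_ev 2 2 Xcg))).mul
     (((hasF_ev 0 2 Xcg).mul (hasF_ev 1 0 Xcg)).sub
      ((hasF_ev 0 0 Xcg).mul (hasF_ev 1 2 Xcg))))).fderiv]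
  simp [ev_apply, Xcg]
  try ring

noncomputable def slTangent (X : Fin 3 → Fin 3 → ℂ) : Submodule ℂ (Fin 3 → Fin 3 → ℂ) where
  carrier := {Y | ((Matrix.of X)⁻¹ * Matrix.of Y).trace = 0}
  add_mem' := by
    intro a b ha hb
    have h : Matrix.of (a + b) = Matrix.of a + Matrix.of b := rfl
    simp only [Set.mem_setOf_eq, h, Matrix.mul_add, Matrix.trace_add] at *
    rw [ha, hb, add_zero]
  zero_mem' := by
    have h : Matrix.of (0 : Fin 3 → Fin 3 → ℂ) = (0 : Matrix (Fin 3) (Fin 3) ℂ) := rfl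
    simp [Set.mem_setOf_eq, h]
  smul_mem' := by
    intro c a ha
    have h : Matrix.of (c • a) = c • Matrix.of a := rfl
    simp only [Set.mem_setOf_eq, h, Matrix.mul_smul, Matrix.trace_smul] at *
    rw [ha, smul_zero]

def Xinv : Ecg := ![![2,0,-1],![-4,1,2],![-1,0,1]]

lemma hXinv : (Matrix.of Xcg)⁻¹ = Matrix.of Xinv := by
  apply Matrix.inv_eq_right_inv
  ext i j
  fin_cases i <;> fin_cases j <;>
    simp [Matrix.mul_apply, Fin.sum_univ_three, Xcg, Xinv, Matrix.one_apply] <;> norm_num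

lemma memT (v : Ecg)
    (h : 2*v 0 0 - 4*v 0 1 - v 0 2 + v 1 1 + 2*v 2 1 - v 2 0 + v 2 2 = 0) :
    v ∈ slTangent Xcg := by
  show ((Matrix.of Xcg)⁻¹ * Matrix.of v).trace = 0
  rw [hXinv]
  simp only [Matrix.trace_fin_three, Matrix.mul_apply, Fin.sum_univ_three, Matrix.of_apply]
  simp only [Xinv]
  norm_num [Matrix.cons_val_two, Matrix.vecHead, Matrix.vecTail]
  linear_combination h


/-- There exists a point `X ∈ SL₃` at which the differentials of the eight functions
`P₁,…,P₈`, restricted to the tangent space of `SL₃` at `X`, are linearly independent;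
in particular they span an 8-dimensional space (8 = dim SL₃). -/
theorem PCG_differentials_linearIndependent :
    ∃ X : Fin 3 → Fin 3 → ℂ, (Matrix.of X).det = 1 ∧
      LinearIndependent ℂ
        (fun i : Fin 8 =>
          ((fderiv ℂ (PCG i) X).toLinearMap).domRestrict (slTangent X)) := by
  refine ⟨Xcg, ?_, ?_⟩
  · simp [Matrix.det_fin_three, Xcg]; norm_num
  rw [Fintype.linearIndependent_iff]
  intro g hg
  have m0 : (![![1,0,0],![0,0,0],![0,0,-2]] : Ecg) ∈ slTangent Xcg := by apply memT; norm_num [Matrix.cons_val_two, Matrix.vecHead, Matrix.vecTail]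
  have m1 : (![![0,1,0],![0,0,0],![0,0,4]] : Ecg) ∈ slTangent Xcg := by apply memT; norm_num [Matrix.cons_val_two, Matrix.vecHead, Matrix.vecTail]
  have m2 : (![![0,0,1],![0,0,0],![0,0,1]] : Ecg) ∈ slTangent Xcg := by apply memT; norm_num [Matrix.cons_val_two, Matrix.vecHead, Matrix.vecTail]
  have m3 : (![![0,0,0],![1,0,0],![0,0,0]] : Ecg) ∈ slTangent Xcg := by apply memT; norm_num [Matrix.cons_val_two, Matrix.vecHead, Matrix.vecTail]
  have m4 : (![![0,0,0],![0,1,0],![0,0,-1]] : Ecg) ∈ slTangent Xcg := by apply memT; norm_num [Matrix.cons_val_two, Matrix.vecHead, Matrix.vecTail]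
  have m5 : (![![0,0,0],![0,0,1],![0,0,0]] : Ecg) ∈ slTangent Xcg := by apply memT; norm_num [Matrix.cons_val_two, Matrix.vecHead, Matrix.vecTail]
  have m6 : (![![0,0,0],![0,0,0],![1,0,1]] : Ecg) ∈ slTangent Xcg := by apply memT; norm_num [Matrix.cons_val_two, Matrix.vecHead, Matrix.vecTail]
  have m7 : (![![0,0,0],![0,0,0],![0,1,-2]] : Ecg) ∈ slTangent Xcg := by apply memT; norm_num [Matrix.cons_val_two, Matrix.vecHead, Matrix.vecTail]
  have q0 := LinearMap.congr_fun hg ⟨_, m0⟩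
  have q1 := LinearMap.congr_fun hg ⟨_, m1⟩
  have q2 := LinearMap.congr_fun hg ⟨_, m2⟩
  have q3 := LinearMap.congr_fun hg ⟨_, m3⟩
  have q4 := LinearMap.congr_fun hg ⟨_, m4⟩
  have q5 := LinearMap.congr_fun hg ⟨_, m5⟩
  have q6 := LinearMap.congr_fun hg ⟨_, m6⟩
  have q7 := LinearMap.congr_fun hg ⟨_, m7⟩
  simp only [LinearMap.sum_apply, LinearMap.smul_apply, LinearMap.domRestrict_apply,
    LinearMap.zero_apply, ContinuousLinearMap.coe_coe, Fin.sum_univ_eight, smul_eq_mul,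
    LinearMap.add_apply] at q0 q1 q2 q3 q4 q5 q6 q7
  simp only [fd0, fd1, fd2, fd3, fd4, fd5, fd6, fd7] at q0 q1 q2 q3 q4 q5 q6 q7
  norm_num [Matrix.cons_val_two, Matrix.vecHead, Matrix.vecTail] at q0 q1 q2 q3 q4 q5 q6 q7
  have h0 : g 0 = 0 := by linear_combination q0 + (1/2 : ℂ)*q1
  have h1 : g 1 = 0 := by linear_combination -(1/2 : ℂ)*q1 + q2 - q4 + 2*q5 + 3*q6 + q7
  have h2 : g 2 = 0 := by linear_combination -q1 + q3 - 2*q4 + q5 + 2*q6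
  have h3 : g 3 = 0 := by linear_combination 3*q1 + 6*q4 + q5 + 2*q6 + 4*q7
  have h4 : g 4 = 0 := by linear_combination -(5/2 : ℂ)*q1 - 5*q4 - 3*q7
  have h5 : g 5 = 0 := by linear_combination -(7/2 : ℂ)*q1 - 8*q4 - 4*q7
  have h6 : g 6 = 0 := by linear_combination q6 + (1/2 : ℂ)*q7
  have h7 : g 7 = 0 := by linear_combination (1/2 : ℂ)*q1 + q4 + (1/2 : ℂ)*q7
  intro i
  fin_cases i
  exacts [h0, h1, h2, h3, h4, h5, h6, h7]
end

section
/- There do not exist three rational functions p_1, p_2, p_3 in variables z_1, z_2, z_3 over ℂ, algebraically independent, and constants c_{ij} ∈ ℂ such that {p_i, p_j} = c_{ij} p_i p_j for all i,j, where the Poisson bracket is determined by {z_1,z_2} = 1, {z_1,z_3} = 0, {z_2,z_3} = 0. -/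
set_option maxRecDepth 10000
set_option synthInstance.maxHeartbeats 1000000
set_option maxHeartbeats 1000000

open MvPolynomial

noncomputable section
namespace NLCB

abbrev R3 := MvPolynomial (Fin 3) ℂ



lemma degOf0_mul {f g : R3} (hf : f ≠ 0) (hg : g ≠ 0) :
    degreeOf 0 (f * g) = degreeOf 0 f + degreeOf 0 g := by
  have h := MvPolynomial.natDegree_finSuccEquiv (R := ℂ) (n := 2)
  rw [← h, ← h, ← h, map_mul]
  exact Polynomial.natDegree_mul (by simpa using hf) (by simpa using hg)

lemma support_pderiv_aux {j : Fin 3} {q : R3} {m : Fin 3 →₀ ℕ}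
    (hm : m ∈ (pderiv j q).support) :
    ∃ s ∈ q.support, s j ≠ 0 ∧ m = s - Finsupp.single j 1 := by
  classical
  conv at hm => rw [q.as_sum, map_sum]
  obtain ⟨s, hs, hm⟩ := Finset.mem_biUnion.mp (MvPolynomial.support_sum hm)
  rw [pderiv_monomial] at hm
  refine ⟨s, hs, ?_, ?_⟩
  · intro h0
    rw [h0] at hm
    simp at hm
  · have := MvPolynomial.support_monomial_subset hm
    simpa using this

lemma degOf0_pderiv1_le (q : R3) : degreeOf 0 (pderiv (1 : Fin 3) q) ≤ degreeOf 0 q := by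
  rw [degreeOf_le_iff]
  intro m hm
  obtain ⟨s, hs, -, rfl⟩ := support_pderiv_aux hm
  refine le_trans ?_ (monomial_le_degreeOf 0 hs)
  simp only [Finsupp.tsub_apply]
  omega

lemma degOf0_pderiv0 {q : R3} (hq : pderiv (0 : Fin 3) q ≠ 0) :
    degreeOf 0 (pderiv (0 : Fin 3) q) + 1 ≤ degreeOf 0 q := by
  have key : ∀ m ∈ (pderiv (0 : Fin 3) q).support, m 0 + 1 ≤ degreeOf 0 q := by
    intro m hm
    obtain ⟨s, hs, h0, rfl⟩ := support_pderiv_aux hm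
    have h2 := monomial_le_degreeOf 0 hs
    simp only [Finsupp.tsub_apply, Finsupp.single_eq_same]
    omega
  obtain ⟨m, hm⟩ := (MvPolynomial.support_nonempty.mpr hq)
  have h3 := key m hm
  have h4 : degreeOf 0 (pderiv (0 : Fin 3) q) ≤ degreeOf 0 q - 1 := by
    rw [degreeOf_le_iff]
    intro m' hm'
    have := key m' hm'
    omega
  omega

lemma pderiv0_eq_zero {q : R3} (hq : degreeOf 0 q = 0) : pderiv (0 : Fin 3) q = 0 := by
  by_contra h
  have := degOf0_pderiv0 h
  omega



lemma bndA (f g : R3) :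
    pderiv (0 : Fin 3) f * g - f * pderiv (0 : Fin 3) g = 0 ∨
      degreeOf 0 (pderiv (0 : Fin 3) f * g - f * pderiv (0 : Fin 3) g) + 1
        ≤ degreeOf 0 f + degreeOf 0 g := by
  set a := pderiv (0 : Fin 3) f * g with ha
  set b := f * pderiv (0 : Fin 3) g with hb
  have hA : a = 0 ∨ degreeOf 0 a + 1 ≤ degreeOf 0 f + degreeOf 0 g := by
    by_cases h : pderiv (0 : Fin 3) f = 0
    · left; rw [ha, h, zero_mul]
    · right
      rw [ha]
      have h1 := degOf0_pderiv0 h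
      have h2 := degreeOf_mul_le (0 : Fin 3) (pderiv (0 : Fin 3) f) g
      omega
  have hB : b = 0 ∨ degreeOf 0 b + 1 ≤ degreeOf 0 f + degreeOf 0 g := by
    by_cases h : pderiv (0 : Fin 3) g = 0
    · left; rw [hb, h, mul_zero]
    · right
      rw [hb]
      have h1 := degOf0_pderiv0 h
      have h2 := degreeOf_mul_le (0 : Fin 3) f (pderiv (0 : Fin 3) g)
      omega
  rcases hA with hA | hA <;> rcases hB with hB | hB
  · left; rw [hA, hB, sub_zero]
  · right; rw [hA, zero_sub, degreeOf_neg]; omega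
  · right; rw [hB, sub_zero]; omega
  · right
    have := degreeOf_sub_le (0 : Fin 3) a b
    omega

lemma bndB (u w : R3) :
    degreeOf 0 (pderiv (1 : Fin 3) u * w - u * pderiv (1 : Fin 3) w)
      ≤ degreeOf 0 u + degreeOf 0 w := by
  have h1 := degreeOf_sub_le (0 : Fin 3) (pderiv (1 : Fin 3) u * w) (u * pderiv (1 : Fin 3) w)
  have h2 := degreeOf_mul_le (0 : Fin 3) (pderiv (1 : Fin 3) u) w
  have h3 := degreeOf_mul_le (0 : Fin 3) u (pderiv (1 : Fin 3) w)
  have h4 := degOf0_pderiv1_le u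
  have h5 := degOf0_pderiv1_le w
  omega

lemma part1_poly {f g u w : R3} (hf : f ≠ 0) (hg : g ≠ 0) (hu : u ≠ 0) (hw : w ≠ 0)
    {c : ℂ} (hc : c ≠ 0)
    (h : (pderiv (0 : Fin 3) f * g - f * pderiv (0 : Fin 3) g) *
          (pderiv (1 : Fin 3) u * w - u * pderiv (1 : Fin 3) w)
        - (pderiv (1 : Fin 3) f * g - f * pderiv (1 : Fin 3) g) *
          (pderiv (0 : Fin 3) u * w - u * pderiv (0 : Fin 3) w)
        = C c * (f * u * g * w)) : False := by
  set a1 := pderiv (0 : Fin 3) f * g - f * pderiv (0 : Fin 3) g with ha1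
  set a2 := pderiv (1 : Fin 3) f * g - f * pderiv (1 : Fin 3) g with ha2
  set b1 := pderiv (0 : Fin 3) u * w - u * pderiv (0 : Fin 3) w with hb1
  set b2 := pderiv (1 : Fin 3) u * w - u * pderiv (1 : Fin 3) w with hb2
  have hfu : f * u * g * w ≠ 0 := by
    exact mul_ne_zero (mul_ne_zero (mul_ne_zero hf hu) hg) hw
  have hCc : (C c : R3) ≠ 0 := by
    simpa using hc
  have hRHS : C c * (f * u * g * w) ≠ 0 := mul_ne_zero hCc hfu
  have hdR : degreeOf 0 (C c * (f * u * g * w))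
      = degreeOf 0 f + degreeOf 0 u + degreeOf 0 g + degreeOf 0 w := by
    rw [degOf0_mul hCc hfu, degOf0_mul (mul_ne_zero (mul_ne_zero hf hu) hg) hw,
      degOf0_mul (mul_ne_zero hf hu) hg, degOf0_mul hf hu, degreeOf_C]
    ring
  set S := degreeOf 0 f + degreeOf 0 u + degreeOf 0 g + degreeOf 0 w with hS
  by_cases hS0 : S = 0
  · -- all z1-degrees zero: a1 = b1 = 0
    have hf0 : degreeOf 0 f = 0 := by omega
    have hg0 : degreeOf 0 g = 0 := by omega
    have hu0 : degreeOf 0 u = 0 := by omega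
    have hw0 : degreeOf 0 w = 0 := by omega
    have ha1z : a1 = 0 := by
      rw [ha1, pderiv0_eq_zero hf0, pderiv0_eq_zero hg0, zero_mul, mul_zero, sub_zero]
    have hb1z : b1 = 0 := by
      rw [hb1, pderiv0_eq_zero hu0, pderiv0_eq_zero hw0, zero_mul, mul_zero, sub_zero]
    rw [ha1z, hb1z, zero_mul, mul_zero, sub_zero] at h
    exact hRHS h.symm
  · -- S ≥ 1 : degree of LHS ≤ S - 1 < S
    have hT1 : a1 * b2 = 0 ∨ degreeOf 0 (a1 * b2) + 1 ≤ S := by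
      rcases bndA f g with h1 | h1
      · left; rw [← ha1] at h1; rw [h1, zero_mul]
      · right
        rw [← ha1] at h1
        have h2 := degreeOf_mul_le (0 : Fin 3) a1 b2
        have h3 := bndB u w
        rw [← hb2] at h3
        omega
    have hT2 : a2 * b1 = 0 ∨ degreeOf 0 (a2 * b1) + 1 ≤ S := by
      rcases bndA u w with h1 | h1
      · left; rw [← hb1] at h1; rw [h1, mul_zero]
      · right
        rw [← hb1] at h1
        have h2 := degreeOf_mul_le (0 : Fin 3) a2 b1
        have h3 := bndB f g
        rw [← ha2] at h3
        omega
    have hLHS : degreeOf 0 (a1 * b2 - a2 * b1) + 1 ≤ S ∨ a1 * b2 - a2 * b1 = 0 := by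
      rcases hT1 with h1 | h1 <;> rcases hT2 with h2 | h2
      · right; rw [h1, h2, sub_zero]
      · left; rw [h1, zero_sub, degreeOf_neg]; omega
      · left; rw [h2, sub_zero]; omega
      · left
        have := degreeOf_sub_le (0 : Fin 3) (a1 * b2) (a2 * b1)
        omega
    rcases hLHS with h1 | h1
    · rw [h] at h1
      omega
    · rw [h1] at h
      exact hRHS h.symm
variable {K : Type*} [Field K] [Algebra R3 K] [IsFractionRing R3 K]
    [Algebra ℂ K] [IsScalarTower ℂ R3 K]

local notation "ι" => algebraMap R3 K





lemma quot_deriv (D : Derivation ℂ K K) (j : Fin 3)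
    (hD : ∀ q : R3, D (ι q) = ι (pderiv j q))
    {x : K} {f g : R3} (hpg : x * ι g = ι f) :
    D x * ι g ^ 2 = ι (pderiv j f * g - f * pderiv j g) := by
  have h0 : D (x * ι g) = D (ι f) := by rw [hpg]
  rw [D.leibniz, hD g, hD f, smul_eq_mul, smul_eq_mul] at h0
  rw [map_sub, map_mul, map_mul]
  linear_combination (ι g) * h0 - (ι (pderiv j g)) * hpg

lemma part1 (D₁ D₂ : Derivation ℂ K K)
    (hD₁ : ∀ q : R3, D₁ (ι q) = ι (pderiv 0 q))
    (hD₂ : ∀ q : R3, D₂ (ι q) = ι (pderiv 1 q))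
    {x y : K} (hx : x ≠ 0) (hy : y ≠ 0) {c : ℂ}
    (hbr : D₁ x * D₂ y - D₂ x * D₁ y = algebraMap ℂ K c * (x * y)) : c = 0 := by
  by_contra hc
  obtain ⟨f, g, hgm, hfg⟩ := IsFractionRing.div_surjective (A := R3) x
  obtain ⟨u, w, hwm, huw⟩ := IsFractionRing.div_surjective (A := R3) y
  have hinj := IsFractionRing.injective R3 K
  have hg : g ≠ 0 := nonZeroDivisors.ne_zero hgm
  have hw : w ≠ 0 := nonZeroDivisors.ne_zero hwm
  have hιg : ι g ≠ 0 := (map_ne_zero_iff _ hinj).mpr hg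
  have hιw : ι w ≠ 0 := (map_ne_zero_iff _ hinj).mpr hw
  have hpg : x * ι g = ι f := by rw [← hfg]; field_simp
  have hpw : y * ι w = ι u := by rw [← huw]; field_simp
  have hf : f ≠ 0 := by
    intro h0; apply hx
    have h1 := hpg; rw [h0, map_zero] at h1
    exact (mul_eq_zero.mp h1).resolve_right hιg
  have hu : u ≠ 0 := by
    intro h0; apply hy
    have h1 := hpw; rw [h0, map_zero] at h1
    exact (mul_eq_zero.mp h1).resolve_right hιw
  have hA1 := quot_deriv D₁ 0 hD₁ hpg
  have hA2 := quot_deriv D₂ 1 hD₂ hpg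
  have hB1 := quot_deriv D₁ 0 hD₁ hpw
  have hB2 := quot_deriv D₂ 1 hD₂ hpw
  have hCc : algebraMap ℂ K c = ι (C c) := by
    rw [IsScalarTower.algebraMap_apply ℂ R3 K]
    rfl
  have key : ι ((pderiv (0 : Fin 3) f * g - f * pderiv (0 : Fin 3) g) *
          (pderiv (1 : Fin 3) u * w - u * pderiv (1 : Fin 3) w)
        - (pderiv (1 : Fin 3) f * g - f * pderiv (1 : Fin 3) g) *
          (pderiv (0 : Fin 3) u * w - u * pderiv (0 : Fin 3) w))
      = ι (C c * (f * u * g * w)) := by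
    rw [map_sub, map_mul, map_mul, ← hA1, ← hA2, ← hB1, ← hB2,
      map_mul, map_mul, map_mul, map_mul, ← hCc, ← hpg, ← hpw]
    ring_nf
    linear_combination (ι g ^2 * ι w ^2) * hbr
  exact part1_poly hf hg hu hw hc (hinj key)





lemma four_dep (q : Option (Fin 3) → K) : ¬ AlgebraicIndependent ℂ q := by
  classical
  intro hq
  have hinj := IsFractionRing.injective R3 K
  choose f g hgm hfg using fun o => IsFractionRing.div_surjective (A := R3) (q o)
  obtain ⟨d, hd1, hfd, hgd⟩ : ∃ d : ℕ, 1 ≤ d ∧ (∀ o, (f o).totalDegree ≤ d) ∧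
      ∀ o, (g o).totalDegree ≤ d := by
    refine ⟨(Finset.univ.sup fun o : Option (Fin 3) =>
      max (f o).totalDegree (g o).totalDegree) + 1, Nat.le_add_left 1 _, fun o => ?_, fun o => ?_⟩
    · exact le_trans (le_trans (le_max_left _ _)
        (Finset.le_sup (f := fun o : Option (Fin 3) => max (f o).totalDegree (g o).totalDegree)
          (Finset.mem_univ o))) (Nat.le_succ _)
    · exact le_trans (le_trans (le_max_right _ _)
        (Finset.le_sup (f := fun o : Option (Fin 3) => max (f o).totalDegree (g o).totalDegree)
          (Finset.mem_univ o))) (Nat.le_succ _)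
  obtain ⟨N, M, hMN, harith⟩ : ∃ N M : ℕ, 4 * (N * d) ≤ M ∧ (M + 1) ^ 3 < (N + 1) ^ 4 := by
    refine ⟨64 * d ^ 3, 4 * (64 * d ^ 3 * d), le_of_eq (by ring), ?_⟩
    have hstep : 4 * (64 * d ^ 3 * d) + 1 ≤ 4 * d * (64 * d ^ 3 + 1) := by
      ring_nf
      omega
    calc (4 * (64 * d ^ 3 * d) + 1) ^ 3 ≤ (4 * d * (64 * d ^ 3 + 1)) ^ 3 :=
        Nat.pow_le_pow_left hstep 3
      _ = 64 * d ^ 3 * (64 * d ^ 3 + 1) ^ 3 := by ring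
      _ < (64 * d ^ 3 + 1) ^ 4 := by
          have h9 : (64 * d ^ 3 + 1) ^ 4 = (64 * d ^ 3 + 1) * (64 * d ^ 3 + 1) ^ 3 := by ring
          rw [h9]
          exact Nat.mul_lt_mul_of_lt_of_le (Nat.lt_succ_self _) le_rfl (by positivity)
  have hg0 : ∀ o, g o ≠ 0 := fun o => nonZeroDivisors.ne_zero (hgm o)
  have hιg : ∀ o, ι (g o) ≠ 0 := fun o => (map_ne_zero_iff _ hinj).mpr (hg0 o)
  -- the exponent map
  set e : (Option (Fin 3) → Fin (N + 1)) → (Option (Fin 3) →₀ ℕ) :=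
    fun β => Finsupp.equivFunOnFinite.symm fun o => (β o : ℕ) with he
  have heinj : Function.Injective e := by
    intro β β' h
    funext o
    have := congrArg (fun m => m o) h
    simp only [he, Finsupp.coe_equivFunOnFinite_symm] at this
    exact Fin.ext this
  set F : (Option (Fin 3) → Fin (N + 1)) → R3 :=
    fun β => ∏ o, (f o) ^ (β o : ℕ) * (g o) ^ (N - (β o : ℕ)) with hF
  have hFdeg : ∀ β, (F β).totalDegree ≤ M := by
    intro β
    refine le_trans (totalDegree_finset_prod _ _) ?_
    have hone : ∀ o : Option (Fin 3),
        ((f o) ^ (β o : ℕ) * (g o) ^ (N - (β o : ℕ))).totalDegree ≤ N * d := by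
      intro o
      have h1 : ((f o) ^ (β o : ℕ)).totalDegree ≤ (β o : ℕ) * d :=
        le_trans (totalDegree_pow _ _) (Nat.mul_le_mul_left _ (hfd o))
      have h2 : ((g o) ^ (N - (β o : ℕ))).totalDegree ≤ (N - (β o : ℕ)) * d :=
        le_trans (totalDegree_pow _ _) (Nat.mul_le_mul_left _ (hgd o))
      have h4 : (β o : ℕ) + (N - (β o : ℕ)) = N := by
        have := Fin.is_le (β o)
        omega
      refine le_trans (totalDegree_mul _ _) (le_trans (Nat.add_le_add h1 h2) ?_)
      rw [← add_mul, h4]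
    refine le_trans (Finset.sum_le_sum fun o _ => hone o) ?_
    rw [Finset.sum_const]
    have hcard : (Finset.univ : Finset (Option (Fin 3))).card = 4 := by simp
    rw [hcard, smul_eq_mul]
    exact hMN
  -- evaluation identity
  have hfac : ∀ (o : Option (Fin 3)) (k : ℕ), k ≤ N →
      q o ^ k * ι (g o) ^ N = ι (f o) ^ k * ι (g o) ^ (N - k) := by
    intro o k hk
    rw [← hfg o, div_pow, div_mul_eq_mul_div, div_eq_iff (pow_ne_zero _ (hιg o)),
      mul_assoc, pow_sub_mul_pow _ hk]
  have hkey : ∀ β, ι (F β) = aeval q (monomial (e β) (1 : ℂ)) * (∏ o, ι (g o)) ^ N := by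
    intro β
    rw [aeval_monomial, map_one, one_mul]
    rw [Finsupp.prod_fintype _ _ (fun i => pow_zero _)]
    rw [hF, map_prod, ← Finset.prod_pow, ← Finset.prod_mul_distrib]
    refine Finset.prod_congr rfl fun o _ => ?_
    rw [map_mul, map_pow, map_pow]
    have hco : e β o = (β o : ℕ) := by
      simp [he]
    rw [hco]
    exact (hfac o (β o : ℕ) (Fin.is_le _)).symm
  -- the spanning monomial set
  set S : Finset R3 := Finset.image
    (fun b : Fin 3 → Fin (M + 1) =>
      (monomial (Finsupp.equivFunOnFinite.symm fun i => (b i : ℕ)) (1 : ℂ) : R3))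
    Finset.univ with hS
  have hspan : ∀ p : R3, p.totalDegree ≤ M → p ∈ Submodule.span ℂ (S : Set R3) := by
    intro p hp
    rw [p.as_sum]
    refine Submodule.sum_mem _ fun m hm => ?_
    have h1 : (monomial m (coeff m p) : R3) = (coeff m p) • monomial m (1 : ℂ) := by
      rw [smul_monomial, smul_eq_mul, mul_one]
    rw [h1]
    refine Submodule.smul_mem _ _ (Submodule.subset_span ?_)
    have hmb : ∀ i, m i < M + 1 := by
      intro i
      have h2 := monomial_le_degreeOf i hm
      have h3 := degreeOf_le_totalDegree p i
      omega
    rw [Finset.mem_coe, hS, Finset.mem_image]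
    refine ⟨fun i => ⟨m i, hmb i⟩, Finset.mem_univ _, ?_⟩
    congr 1
    ext i
    simp
  -- linear independence
  have li : LinearIndependent ℂ
      (fun β : Option (Fin 3) → Fin (N + 1) =>
        (⟨F β, hspan _ (hFdeg β)⟩ : Submodule.span ℂ (S : Set R3))) := by
    rw [Fintype.linearIndependent_iff]
    intro lam hsum β₀
    have h1 : ∑ β, lam β • F β = 0 := by
      have h0 := congrArg (Submodule.span ℂ (S : Set R3)).subtype hsum
      simpa using h0
    have h2 : ∑ β, lam β • ι (F β) = 0 := by
      have h2' := congrArg (IsScalarTower.toAlgHom ℂ R3 K).toLinearMap h1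
      simpa using h2'
    have h3 : ∑ β, lam β • (aeval q (monomial (e β) (1 : ℂ)) * (∏ o, ι (g o)) ^ N) = 0 := by
      rw [← h2]
      exact Finset.sum_congr rfl fun β _ => by rw [hkey β]
    have h4 : (∑ β, lam β • aeval q (monomial (e β) (1 : ℂ))) * (∏ o, ι (g o)) ^ N = 0 := by
      rw [Finset.sum_mul]
      rw [← h3]
      exact Finset.sum_congr rfl fun β _ => smul_mul_assoc _ _ _
    have h5 : ∑ β, lam β • aeval q (monomial (e β) (1 : ℂ)) = 0 :=
      (mul_eq_zero.mp h4).resolve_right (pow_ne_zero _ (Finset.prod_ne_zero_iff.mpr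
        fun o _ => hιg o))
    have h6 : aeval (R := ℂ) q (∑ β, lam β • monomial (e β) (1 : ℂ)) = aeval (R := ℂ) q 0 := by
      rw [map_zero, map_sum (aeval q) _ _]
      rw [← h5]
      exact Finset.sum_congr rfl fun β _ => by rw [map_smul]
    have h7 : ∑ β, lam β • (monomial (e β) (1 : ℂ) : MvPolynomial (Option (Fin 3)) ℂ) = 0 :=
      hq h6
    have h8 := congrArg (coeff (e β₀)) h7
    rw [coeff_sum] at h8
    rw [Finset.sum_eq_single β₀] at h8
    · rw [coeff_smul, coeff_monomial, if_pos rfl, smul_eq_mul, mul_one] at h8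
      exact h8
    · intro β _ hβ
      rw [coeff_smul, coeff_monomial, if_neg (fun h => hβ (heinj h)), smul_zero]
    · intro h
      exact absurd (Finset.mem_univ β₀) h
  -- cardinality contradiction
  have card1 : Fintype.card (Option (Fin 3) → Fin (N + 1)) ≤
      Module.finrank ℂ (Submodule.span ℂ (S : Set R3)) :=
    li.fintype_card_le_finrank
  have card2 : Module.finrank ℂ (Submodule.span ℂ (S : Set R3)) ≤ S.card :=
    finrank_span_finset_le_card S
  have card3 : S.card ≤ (M + 1) ^ 3 := by
    refine le_trans Finset.card_image_le ?_
    rw [Finset.card_univ, Fintype.card_fun]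
    simp
  have card0 : Fintype.card (Option (Fin 3) → Fin (N + 1)) = (N + 1) ^ 4 := by
    rw [Fintype.card_fun]
    simp
  have hfinal : (N + 1) ^ 4 ≤ (M + 1) ^ 3 := by
    rw [← card0]
    exact le_trans card1 (le_trans card2 card3)
  exact Nat.lt_irrefl _ (lt_of_le_of_lt hfinal harith)





lemma part2 (D₁ D₂ : Derivation ℂ K K)
    (hD₁ : ∀ q : R3, D₁ (ι q) = ι (pderiv 0 q))
    (hD₂ : ∀ q : R3, D₂ (ι q) = ι (pderiv 1 q))
    (p : Fin 3 → K) (hind : AlgebraicIndependent ℂ p)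
    (hmin : ∀ i j, D₁ (p i) * D₂ (p j) = D₂ (p i) * D₁ (p j)) : False := by
  classical
  obtain ⟨D, t, hDp, hDt⟩ : ∃ (D : Derivation ℂ K K) (t : K),
      (∀ i, D (p i) = 0) ∧ D t ≠ 0 := by
    by_cases hall : ∀ k, D₁ (p k) = 0
    · refine ⟨D₁, ι (X 0), hall, ?_⟩
      rw [hD₁, pderiv_X_self, map_one]
      exact one_ne_zero
    · push_neg at hall
      obtain ⟨k, hk⟩ := hall
      refine ⟨D₂ (p k) • D₁ - D₁ (p k) • D₂, ι (X 1), fun i => ?_, ?_⟩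
      · simp only [Derivation.sub_apply, Derivation.smul_apply, smul_eq_mul]
        linear_combination - hmin k i
      · simp only [Derivation.sub_apply, Derivation.smul_apply, smul_eq_mul, hD₁, hD₂,
          pderiv_X_self, pderiv_X_of_ne (show (1 : Fin 3) ≠ 0 by decide), map_one, map_zero,
          mul_zero, mul_one, zero_sub]
        exact neg_ne_zero.mpr hk
  set A := Algebra.adjoin ℂ (Set.range p) with hA
  have hAkill : ∀ a : A, D ((a : K)) = 0 := by
    rintro ⟨a, ha⟩
    induction ha using Algebra.adjoin_induction with
    | mem x hx => obtain ⟨i, rfl⟩ := hx; exact hDp i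
    | algebraMap r => exact D.map_algebraMap r
    | add x y hx hy ihx ihy => rw [map_add, ihx, ihy, add_zero]
    | mul x y hx hy ihx ihy =>
        rw [D.leibniz, ihx, ihy, smul_zero, smul_zero, add_zero]
  have halg : IsAlgebraic A t := by
    by_contra htr
    exact four_dep (fun o : Option (Fin 3) => o.elim t p) ((hind.option_iff_transcendental t).mpr htr)
  haveI : CharZero K := charZero_of_injective_algebraMap (algebraMap ℂ K).injective
  haveI : CharZero A := ⟨fun m n h => by
    have h2 : ((m : A) : K) = ((n : A) : K) := by rw [h]
    push_cast at h2
    exact Nat.cast_injective (R := K) h2⟩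
  have chain : ∀ F : Polynomial A,
      D (Polynomial.aeval t F) = Polynomial.aeval t (Polynomial.derivative F) * D t := by
    intro F
    induction F using Polynomial.induction_on' with
    | add f g hf hg => simp only [Polynomial.derivative_add, map_add, hf, hg, add_mul]
    | monomial n a =>
      rw [Polynomial.aeval_monomial, Polynomial.derivative_monomial, Polynomial.aeval_monomial,
        D.leibniz, D.leibniz_pow]
      have hz : D (algebraMap A K a) = 0 := hAkill a
      rw [hz, smul_zero, add_zero, map_mul, map_natCast]
      simp only [smul_eq_mul, nsmul_eq_mul]
      ring
  obtain ⟨F₀, hF₀, hF₀e⟩ := halg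
  have hex : ∃ n, ∃ F : Polynomial A, F ≠ 0 ∧ Polynomial.aeval t F = 0 ∧ F.natDegree = n :=
    ⟨F₀.natDegree, F₀, hF₀, hF₀e, rfl⟩
  obtain ⟨F, hF, hFe, hFn⟩ := Nat.find_spec hex
  by_cases h0 : F.natDegree = 0
  · obtain ⟨a, ha⟩ := Polynomial.natDegree_eq_zero.mp h0
    rw [← ha] at hFe hF
    rw [Polynomial.aeval_C] at hFe
    have ha0 : a = 0 := by
      have : (a : K) = 0 := hFe
      exact_mod_cast this
    exact hF (by rw [ha0, map_zero])
  · have hd : Polynomial.derivative F ≠ 0 := fun h =>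
      h0 (Polynomial.natDegree_eq_zero_of_derivative_eq_zero h)
    have hlt : (Polynomial.derivative F).natDegree < F.natDegree :=
      Polynomial.natDegree_derivative_lt h0
    have hch := chain F
    rw [hFe, map_zero] at hch
    have h1 : Polynomial.aeval t (Polynomial.derivative F) = 0 := by
      rcases mul_eq_zero.mp hch.symm with h | h
      · exact h
      · exact absurd h hDt
    rw [hFn] at hlt
    exact Nat.find_min hex hlt ⟨Polynomial.derivative F, hd, h1, rfl⟩

end NLCB
end

open MvPolynomial

/-- Non-existence of a log-canonical transcendence basis for the Poisson bracket
`{f,g} = ∂f/∂z₁ ∂g/∂z₂ - ∂f/∂z₂ ∂g/∂z₁` on `ℂ(z₁,z₂,z₃)`.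

Here `K` is the field of rational functions `ℂ(z₁,z₂,z₃)` (the fraction field of
`ℂ[z₁,z₂,z₃]`), and `D₁`, `D₂` are the unique derivations of `K` extending
`∂/∂z₁` and `∂/∂z₂`.  The bracket `{f,g} = D₁f · D₂g - D₂f · D₁g` satisfies
`{z₁,z₂} = 1`, `{z₁,z₃} = 0`, `{z₂,z₃} = 0`.  There is no algebraically
independent triple `p₁,p₂,p₃ ∈ K` with `{p_i,p_j} = c_{ij} p_i p_j` for
constants `c_{ij} ∈ ℂ`. -/
theorem no_log_canonical_basis
    (K : Type*) [Field K] [Algebra (MvPolynomial (Fin 3) ℂ) K]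
    [IsFractionRing (MvPolynomial (Fin 3) ℂ) K]
    [Algebra ℂ K] [IsScalarTower ℂ (MvPolynomial (Fin 3) ℂ) K]
    (D₁ D₂ : Derivation ℂ K K)
    (hD₁ : ∀ q : MvPolynomial (Fin 3) ℂ,
      D₁ (algebraMap (MvPolynomial (Fin 3) ℂ) K q) =
        algebraMap (MvPolynomial (Fin 3) ℂ) K (pderiv 0 q))
    (hD₂ : ∀ q : MvPolynomial (Fin 3) ℂ,
      D₂ (algebraMap (MvPolynomial (Fin 3) ℂ) K q) =
        algebraMap (MvPolynomial (Fin 3) ℂ) K (pderiv 1 q)) :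
    ¬ ∃ p : Fin 3 → K, AlgebraicIndependent ℂ p ∧
        ∃ c : Fin 3 → Fin 3 → ℂ, ∀ i j : Fin 3,
          D₁ (p i) * D₂ (p j) - D₂ (p i) * D₁ (p j) =
            algebraMap ℂ K (c i j) * (p i * p j) := by
  rintro ⟨p, hind, c, hc⟩
  have hp0 : ∀ i, p i ≠ 0 := by
    intro i h
    have h1 : aeval (R := ℂ) p (X i : MvPolynomial (Fin 3) ℂ) = aeval (R := ℂ) p 0 := by
      simp [h]
    exact MvPolynomial.X_ne_zero i (hind h1)
  have hc0 : ∀ i j, c i j = 0 := fun i j =>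
    NLCB.part1 D₁ D₂ hD₁ hD₂ (hp0 i) (hp0 j) (hc i j)
  have hmin : ∀ i j, D₁ (p i) * D₂ (p j) = D₂ (p i) * D₁ (p j) := by
    intro i j
    have h1 := hc i j
    rw [hc0, map_zero, zero_mul] at h1
    exact sub_eq_zero.mp h1
  exact NLCB.part2 D₁ D₂ hD₁ hD₂ p hind hmin
end

section
/- Let p_1, p_2 ∈ ℂ(z_1,z_2,z_3) be nonzero rational functions and define {p_1,p_2} = ∂p_1/∂z_1 · ∂p_2/∂z_2 - ∂p_1/∂z_2 · ∂p_2/∂z_1. Write each p_i as a ratio of polynomials in z_1 (with coefficients rational in z_2, z_3) and let δ_i be the difference of the z_1-degrees of the numerator and denominator of p_i. Then {p_1, p_2}, written as such a ratio, has numerator-minus-denominator z_1-degree at most δ_1 + δ_2 - 1. In particular, {p_1, p_2} cannot equal c·p_1p_2 for any nonzero constant c. -/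
open Polynomial

namespace BracketAux

variable {F : Type*} [Field F]

/-- Coefficient-wise application of `δ` to a polynomial. -/
noncomputable def d2 (δ : F → F) (f : Polynomial F) : Polynomial F :=
  f.sum fun n a => Polynomial.C (δ a) * X ^ n

lemma delta_zero (δ : F → F) (hδadd : ∀ a b, δ (a + b) = δ a + δ b) : δ 0 = 0 := by
  have h := hδadd 0 0
  rw [add_zero] at h
  exact (left_eq_add.mp h)

lemma d2_monomial (δ : F → F) (hδadd : ∀ a b, δ (a + b) = δ a + δ b) (n : ℕ) (a : F) :
    d2 δ (Polynomial.C a * X ^ n) = Polynomial.C (δ a) * X ^ n := by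
  rw [d2, Polynomial.C_mul_X_pow_eq_monomial, Polynomial.sum_monomial_index]
  rw [delta_zero δ hδadd, map_zero, zero_mul]

lemma d2_add (δ : F → F) (hδadd : ∀ a b, δ (a + b) = δ a + δ b) (f g : Polynomial F) :
    d2 δ (f + g) = d2 δ f + d2 δ g := by
  rw [d2, d2, d2, Polynomial.sum_add_index]
  · intro i
    rw [delta_zero δ hδadd, map_zero, zero_mul]
  · intro i b₁ b₂
    rw [hδadd, map_add, add_mul]

lemma d2_degree_le (δ : F → F) (hδadd : ∀ a b, δ (a + b) = δ a + δ b) (f : Polynomial F) :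
    (d2 δ f).degree ≤ f.degree := by
  refine (Polynomial.degree_sum_le _ _).trans ?_
  refine Finset.sup_le fun n hn => ?_
  refine (Polynomial.degree_C_mul_X_pow_le _ _).trans ?_
  exact Polynomial.le_degree_of_ne_zero (Polynomial.mem_support_iff.mp hn)

section Generic

variable (D : RatFunc F → RatFunc F) (d : Polynomial F → Polynomial F)

local notation "A" => algebraMap (Polynomial F) (RatFunc F)

/-- A derivation-like map is determined on quotients. -/
lemma D_quot (hmul : ∀ f g, D (f * g) = f * D g + g * D f)
    (hcompat : ∀ f, D (A f) = A (d f)) (p : RatFunc F) :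
    D p * (A p.denom * A p.denom)
      = A (d p.num) * A p.denom - A p.num * A (d p.denom) := by
  have hg : (A p.denom) ≠ 0 := RatFunc.algebraMap_ne_zero p.denom_ne_zero
  have h1 : p * A p.denom = A p.num :=
    ((div_eq_iff hg).mp (RatFunc.num_div_denom p)).symm
  have h2 := hmul p (A p.denom)
  rw [h1, hcompat, hcompat] at h2
  linear_combination (-(A p.denom)) * h2 - (A (d p.denom)) * h1

/-- Degree bound when the polynomial derivative strictly drops degree. -/
lemma intDegree_D_le_sub_one (hmul : ∀ f g, D (f * g) = f * D g + g * D f)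
    (hcompat : ∀ f, D (A f) = A (d f))
    (hd : ∀ f : Polynomial F, f ≠ 0 → (d f).degree < f.degree)
    (p : RatFunc F) (hp : p ≠ 0) (hDp : D p ≠ 0) :
    (D p).intDegree ≤ p.intDegree - 1 := by
  set f := p.num with hf
  set g := p.denom with hg
  have hf0 : f ≠ 0 := RatFunc.num_ne_zero hp
  have hg0 : g ≠ 0 := p.denom_ne_zero
  have hAg : (A g) ≠ 0 := RatFunc.algebraMap_ne_zero hg0
  set N : Polynomial F := d f * g - f * d g with hN
  have hq : D p * (A (g * g)) = A N := by
    rw [hN, map_mul, map_sub, map_mul, map_mul]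
    exact D_quot D d hmul hcompat p
  have hN0 : N ≠ 0 := by
    intro h
    rw [h, map_zero] at hq
    exact hDp (by
      have := mul_eq_zero.mp hq
      rcases this with h' | h'
      · exact h'
      · exact absurd h' (by rw [map_mul]; exact mul_ne_zero hAg hAg))
  have hfg0 : f * g ≠ 0 := mul_ne_zero hf0 hg0
  -- degree bound on N
  have hdegN : N.degree < (f * g).degree := by
    rw [hN]
    refine lt_of_le_of_lt (Polynomial.degree_sub_le _ _) ?_
    rw [max_lt_iff]
    constructor
    · rw [Polynomial.degree_mul, Polynomial.degree_mul]
      by_cases hdf : d f = 0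
      · rw [hdf, Polynomial.degree_zero, WithBot.bot_add]
        exact Ne.bot_lt (by
          rw [← Polynomial.degree_mul]
          exact Polynomial.degree_ne_bot.mpr hfg0)
      · exact WithBot.add_lt_add_right (Polynomial.degree_ne_bot.mpr hg0) (hd f hf0)
    · rw [Polynomial.degree_mul, Polynomial.degree_mul, add_comm f.degree, add_comm f.degree]
      by_cases hdg : d g = 0
      · rw [hdg, Polynomial.degree_zero, WithBot.bot_add]
        exact Ne.bot_lt (by
          rw [add_comm, ← Polynomial.degree_mul]
          exact Polynomial.degree_ne_bot.mpr hfg0)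
      · exact WithBot.add_lt_add_right (Polynomial.degree_ne_bot.mpr hf0) (hd g hg0)
  have hnatN : N.natDegree < (f * g).natDegree := Polynomial.natDegree_lt_natDegree hN0 hdegN
  rw [Polynomial.natDegree_mul hf0 hg0] at hnatN
  have hAg2 : (A (g * g)) ≠ 0 := RatFunc.algebraMap_ne_zero (mul_ne_zero hg0 hg0)
  have hint : (D p).intDegree + (A (g * g) : RatFunc F).intDegree = (A N : RatFunc F).intDegree := by
    rw [← RatFunc.intDegree_mul hDp hAg2, hq]
  rw [RatFunc.intDegree_polynomial, RatFunc.intDegree_polynomial,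
    Polynomial.natDegree_mul hg0 hg0] at hint
  have hip : p.intDegree = (f.natDegree : ℤ) - g.natDegree := rfl
  omega

/-- Degree bound when the polynomial derivative does not increase degree. -/
lemma intDegree_D_le (hmul : ∀ f g, D (f * g) = f * D g + g * D f)
    (hcompat : ∀ f, D (A f) = A (d f))
    (hd : ∀ f : Polynomial F, (d f).degree ≤ f.degree)
    (p : RatFunc F) (hp : p ≠ 0) (hDp : D p ≠ 0) :
    (D p).intDegree ≤ p.intDegree := by
  set f := p.num with hf
  set g := p.denom with hg
  have hf0 : f ≠ 0 := RatFunc.num_ne_zero hp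
  have hg0 : g ≠ 0 := p.denom_ne_zero
  have hAg : (A g) ≠ 0 := RatFunc.algebraMap_ne_zero hg0
  set N : Polynomial F := d f * g - f * d g with hN
  have hq : D p * (A (g * g)) = A N := by
    rw [hN, map_mul, map_sub, map_mul, map_mul]
    exact D_quot D d hmul hcompat p
  have hdegN : N.degree ≤ (f * g).degree := by
    rw [hN]
    refine le_trans (Polynomial.degree_sub_le _ _) ?_
    rw [max_le_iff, Polynomial.degree_mul, Polynomial.degree_mul, Polynomial.degree_mul]
    constructor
    · exact add_le_add (hd f) (le_refl g.degree)
    · rw [add_comm f.degree]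
      exact (add_le_add (hd g) (le_refl f.degree)).trans (by rw [add_comm])
  have hnatN : N.natDegree ≤ (f * g).natDegree := Polynomial.natDegree_le_natDegree hdegN
  rw [Polynomial.natDegree_mul hf0 hg0] at hnatN
  have hAg2 : (A (g * g)) ≠ 0 := RatFunc.algebraMap_ne_zero (mul_ne_zero hg0 hg0)
  have hint : (D p).intDegree + (A (g * g) : RatFunc F).intDegree = (A N : RatFunc F).intDegree := by
    rw [← RatFunc.intDegree_mul hDp hAg2, hq]
  rw [RatFunc.intDegree_polynomial, RatFunc.intDegree_polynomial,
    Polynomial.natDegree_mul hg0 hg0] at hint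
  have hip : p.intDegree = (f.natDegree : ℤ) - g.natDegree := rfl
  omega

end Generic

section Compat

local notation "A" => algebraMap (Polynomial F) (RatFunc F)

/-- `D₁` acts as the formal derivative on polynomials. -/
lemma D1_compat (D : RatFunc F → RatFunc F)
    (hadd : ∀ f g, D (f + g) = D f + D g)
    (hmul : ∀ f g, D (f * g) = f * D g + g * D f)
    (hX : D RatFunc.X = 1) (hC : ∀ a : F, D (RatFunc.C a) = 0)
    (f : Polynomial F) : D (A f) = A (derivative f) := by
  induction f using Polynomial.induction_on with
  | C a => rw [RatFunc.algebraMap_C, hC, derivative_C, map_zero]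
  | add p q hp hq => rw [map_add, hadd, hp, hq, derivative_add, map_add]
  | monomial n a ih =>
      have h1 : Polynomial.C a * X ^ (n + 1) = Polynomial.C a * X ^ n * X := by ring
      have hder : derivative (Polynomial.C a * X ^ n * X)
          = Polynomial.C a * X ^ n + X * derivative (Polynomial.C a * X ^ n) := by
        rw [derivative_mul, derivative_X, mul_one]; ring
      rw [h1, map_mul, RatFunc.algebraMap_X, hmul, hX, mul_one, ih, hder, map_add]
      simp only [map_mul, RatFunc.algebraMap_X]

/-- `D₂` acts coefficient-wise through `δ` on polynomials. -/
lemma D2_compat (D : RatFunc F → RatFunc F) (δ : F → F)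
    (hadd : ∀ f g, D (f + g) = D f + D g)
    (hmul : ∀ f g, D (f * g) = f * D g + g * D f)
    (hδadd : ∀ a b, δ (a + b) = δ a + δ b)
    (hX : D RatFunc.X = 0) (hC : ∀ a : F, D (RatFunc.C a) = RatFunc.C (δ a))
    (f : Polynomial F) : D (A f) = A (d2 δ f) := by
  induction f using Polynomial.induction_on with
  | C a =>
      rw [RatFunc.algebraMap_C, hC]
      have : d2 δ (Polynomial.C a) = Polynomial.C (δ a) := by
        have := d2_monomial δ hδadd 0 a
        simpa using this
      rw [this, RatFunc.algebraMap_C]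
  | add p q hp hq => rw [map_add, hadd, hp, hq, d2_add δ hδadd, map_add]
  | monomial n a ih =>
      have h1 : Polynomial.C a * X ^ (n + 1) = Polynomial.C a * X ^ n * X := by ring
      have hd : d2 δ (Polynomial.C a * X ^ n * X)
          = Polynomial.C (δ a) * X ^ n * X := by
        rw [← h1, d2_monomial δ hδadd]; ring
      rw [h1, map_mul, RatFunc.algebraMap_X, hmul, hX, mul_zero, ih, zero_add,
        d2_monomial δ hδadd, hd]
      simp only [map_mul, RatFunc.algebraMap_X]
      ring

end Compat

end BracketAux

/-- The degree-counting lemma.  Work in `K = ℂ(z₂,z₃)(z₁) = RatFunc F`, where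
`F = ℂ(z₂,z₃)` is any field of coefficients; `z₁` is the variable `RatFunc.X`.
`RatFunc.intDegree` is the difference of the `z₁`-degrees of the numerator and
denominator.  Let `D₁ = ∂/∂z₁` (a derivation with `D₁ z₁ = 1`, vanishing on
coefficients), and let `D₂ = ∂/∂z₂` (a derivation with `D₂ z₁ = 0`, acting on
coefficients through a derivation `δ` of `F`).  Then for nonzero `p₁, p₂`, if the
bracket `{p₁,p₂} = D₁p₁·D₂p₂ - D₂p₁·D₁p₂` is nonzero, its `z₁`-degree is at most
`δ₁ + δ₂ - 1`; in particular `{p₁,p₂} ≠ c·p₁p₂` for every nonzero constant `c`. -/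
theorem bracket_intDegree_le (F : Type*) [Field F]
    (D₁ D₂ : RatFunc F → RatFunc F) (δ : F → F)
    (hD₁add : ∀ f g, D₁ (f + g) = D₁ f + D₁ g)
    (hD₁mul : ∀ f g, D₁ (f * g) = f * D₁ g + g * D₁ f)
    (hD₂add : ∀ f g, D₂ (f + g) = D₂ f + D₂ g)
    (hD₂mul : ∀ f g, D₂ (f * g) = f * D₂ g + g * D₂ f)
    (hδadd : ∀ a b, δ (a + b) = δ a + δ b)
    (hδmul : ∀ a b, δ (a * b) = a * δ b + b * δ a)
    (hD₁X : D₁ RatFunc.X = 1)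
    (hD₁C : ∀ a : F, D₁ (RatFunc.C a) = 0)
    (hD₂X : D₂ RatFunc.X = 0)
    (hD₂C : ∀ a : F, D₂ (RatFunc.C a) = RatFunc.C (δ a))
    (p₁ p₂ : RatFunc F) (hp₁ : p₁ ≠ 0) (hp₂ : p₂ ≠ 0) :
    (D₁ p₁ * D₂ p₂ - D₂ p₁ * D₁ p₂ ≠ 0 →
      (D₁ p₁ * D₂ p₂ - D₂ p₁ * D₁ p₂).intDegree ≤ p₁.intDegree + p₂.intDegree - 1) ∧
    ∀ c : F, c ≠ 0 →
      D₁ p₁ * D₂ p₂ - D₂ p₁ * D₁ p₂ ≠ RatFunc.C c * (p₁ * p₂) := by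
  have hc1 := BracketAux.D1_compat D₁ hD₁add hD₁mul hD₁X hD₁C
  have hc2 := BracketAux.D2_compat D₂ δ hD₂add hD₂mul hδadd hD₂X hD₂C
  have hd1 : ∀ f : Polynomial F, f ≠ 0 → (Polynomial.derivative f).degree < f.degree :=
    fun f hf => Polynomial.degree_derivative_lt hf
  have hd2 : ∀ f : Polynomial F, (BracketAux.d2 δ f).degree ≤ f.degree :=
    BracketAux.d2_degree_le δ hδadd
  -- bounds on each of the four derivatives
  have hB1 : ∀ p : RatFunc F, p ≠ 0 → D₁ p ≠ 0 → (D₁ p).intDegree ≤ p.intDegree - 1 :=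
    fun p hp hDp =>
      BracketAux.intDegree_D_le_sub_one D₁ Polynomial.derivative hD₁mul hc1 hd1 p hp hDp
  have hB2 : ∀ p : RatFunc F, p ≠ 0 → D₂ p ≠ 0 → (D₂ p).intDegree ≤ p.intDegree :=
    fun p hp hDp =>
      BracketAux.intDegree_D_le D₂ (BracketAux.d2 δ) hD₂mul hc2 hd2 p hp hDp
  -- intDegree bound on each product term
  have hT₁ : D₁ p₁ * D₂ p₂ ≠ 0 →
      (D₁ p₁ * D₂ p₂).intDegree ≤ p₁.intDegree + p₂.intDegree - 1 := by
    intro h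
    have ha : D₁ p₁ ≠ 0 := left_ne_zero_of_mul h
    have hb : D₂ p₂ ≠ 0 := right_ne_zero_of_mul h
    rw [RatFunc.intDegree_mul ha hb]
    have h1 := hB1 p₁ hp₁ ha
    have h2 := hB2 p₂ hp₂ hb
    omega
  have hT₂ : D₂ p₁ * D₁ p₂ ≠ 0 →
      (D₂ p₁ * D₁ p₂).intDegree ≤ p₁.intDegree + p₂.intDegree - 1 := by
    intro h
    have ha : D₂ p₁ ≠ 0 := left_ne_zero_of_mul h
    have hb : D₁ p₂ ≠ 0 := right_ne_zero_of_mul h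
    rw [RatFunc.intDegree_mul ha hb]
    have h1 := hB2 p₁ hp₁ ha
    have h2 := hB1 p₂ hp₂ hb
    omega
  have key : D₁ p₁ * D₂ p₂ - D₂ p₁ * D₁ p₂ ≠ 0 →
      (D₁ p₁ * D₂ p₂ - D₂ p₁ * D₁ p₂).intDegree ≤ p₁.intDegree + p₂.intDegree - 1 := by
    intro hB
    by_cases h2 : D₂ p₁ * D₁ p₂ = 0
    · rw [h2, sub_zero] at hB ⊢
      exact hT₁ hB
    · by_cases h1 : D₁ p₁ * D₂ p₂ = 0
      · rw [h1, zero_sub, RatFunc.intDegree_neg]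
        exact hT₂ h2
      · have hle := RatFunc.intDegree_add_le (x := D₁ p₁ * D₂ p₂) (y := -(D₂ p₁ * D₁ p₂))
          (neg_ne_zero.mpr h2) (by rwa [← sub_eq_add_neg])
        rw [← sub_eq_add_neg, RatFunc.intDegree_neg] at hle
        exact hle.trans (max_le (hT₁ h1) (hT₂ h2))
  refine ⟨key, ?_⟩
  intro c hc hEq
  have hne : RatFunc.C c * (p₁ * p₂) ≠ 0 := by
    refine mul_ne_zero ?_ (mul_ne_zero hp₁ hp₂)
    simpa using hc
  have hB : D₁ p₁ * D₂ p₂ - D₂ p₁ * D₁ p₂ ≠ 0 := by rw [hEq]; exact hne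
  have hkey := key hB
  rw [hEq, RatFunc.intDegree_mul (by simpa using hc) (mul_ne_zero hp₁ hp₂),
    RatFunc.intDegree_C, RatFunc.intDegree_mul hp₁ hp₂] at hkey
  omega
end

section
/- Let B̃ be an n×(n+m) integer matrix with rank B̃ = n, and let a Poisson bracket on ℂ(x_1,...,x_{n+m}) satisfy {x_i,x_j} = ω_{ij}x_ix_j with skew-symmetric coefficient matrix Ω. If B̃Ω = (D 0) with D diagonal and invertible, then for each k ∈ [n] the adjacent cluster variable x'_k defined by the exchange relation x_kx'_k = Π_{b_{ki}>0} x_i^{b_{ki}} + Π_{b_{ki}<0} x_i^{-b_{ki}} again satisfies log-canonical relations with the other variables: {x'_k, x_j} = ω'_{kj} x'_k x_j for integer constants ω'_{kj}, for all j ≠ k. -/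
/-- Compatibility propagates through exchange relations.  Let `B̃` be an
`n × (n+m)` integer matrix of full rank `n`, and let `{·,·}` be a Poisson
bracket on the field `ℂ(x₁,…,x_{n+m})` (here: an arbitrary field `K` together
with nonzero elements `x i` and a skew-symmetric biderivation `br`) which is
log-canonical in the `x i`: `{x_i,x_j} = ω_{ij} x_i x_j` with skew-symmetric
integer coefficient matrix `Ω`.  If `B̃Ω = (D 0)` with `D` diagonal and
invertible, then for each `k ∈ [n]` the adjacent cluster variable `x'_k`,
defined by the exchange relation
`x_k x'_k = ∏_{b_{ki}>0} x_i^{b_{ki}} + ∏_{b_{ki}<0} x_i^{-b_{ki}}`,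
again satisfies log-canonical relations with the remaining variables:
`{x'_k, x_j} = ω'_{kj} x'_k x_j` for integer constants `ω'_{kj}`, for all
`j ≠ k`. -/
theorem exchange_log_canonical (n m : ℕ)
    (B : Matrix (Fin n) (Fin (n + m)) ℤ)
    (hrank : (B.map ((↑) : ℤ → ℚ)).rank = n)
    (Ω : Matrix (Fin (n + m)) (Fin (n + m)) ℤ)
    (hΩskew : Ω.transpose = -Ω)
    (D : Fin n → ℤ) (hD : ∀ l, D l ≠ 0)
    (hBΩ : ∀ (l : Fin n) (j : Fin (n + m)),
      (∑ i, B l i * Ω i j) = if (j : ℕ) = (l : ℕ) then D l else 0)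
    (K : Type*) [Field K] (x : Fin (n + m) → K) (hx : ∀ i, x i ≠ 0)
    (br : K → K → K)
    (hadd : ∀ f g h, br (f + g) h = br f h + br g h)
    (hskew : ∀ f g, br f g = -br g f)
    (hleibniz : ∀ f g h, br (f * g) h = f * br g h + g * br f h)
    (hlog : ∀ i j, br (x i) (x j) = (Ω i j : K) * x i * x j)
    (k : Fin n) (j : Fin (n + m)) (hjk : (j : ℕ) ≠ (k : ℕ))
    (x'k : K)
    (hexch : x (Fin.castAdd m k) * x'k =
      (∏ i, x i ^ (if 0 < B k i then B k i else 0)) +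
        ∏ i, x i ^ (if B k i < 0 then -B k i else 0)) :
    ∃ w : ℤ, br x'k (x j) = (w : K) * x'k * x j := by
  set y := x j with hy
  -- basic facts
  have hbr0 : ∀ h : K, br 0 h = 0 := by
    intro h
    have h1 : br 0 h = br 0 h + br 0 h := by
      have := hadd 0 0 h; rwa [zero_add] at this
    have h2 : br 0 h + 0 = br 0 h + br 0 h := by rw [add_zero]; exact h1
    exact (add_left_cancel h2).symm
  have hbr1 : ∀ h : K, br 1 h = 0 := by
    intro h
    have h1 : br 1 h = br 1 h + br 1 h := by
      have := hleibniz 1 1 h; simpa using this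
    have h2 : br 1 h + 0 = br 1 h + br 1 h := by rw [add_zero]; exact h1
    exact (add_left_cancel h2).symm
  -- nat power rule
  have hpow : ∀ (f : K) (c : K), br f y = c * f * y →
      ∀ N : ℕ, br (f ^ N) y = (N : K) * c * f ^ N * y := by
    intro f c hc N
    induction N with
    | zero => simpa using hbr1 y
    | succ N ih =>
        have : br (f ^ N * f) y = f ^ N * br f y + f * br (f ^ N) y :=
          hleibniz _ _ _
        rw [← pow_succ] at this
        rw [this, hc, ih]
        push_cast
        ring
  -- inverse rule
  have hinv : ∀ (f : K), f ≠ 0 → ∀ c : K, br f y = c * f * y →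
      br f⁻¹ y = (-c) * f⁻¹ * y := by
    intro f hf c hc
    have h0 : (0 : K) = f * br f⁻¹ y + f⁻¹ * br f y := by
      have := hleibniz f f⁻¹ y
      rw [mul_inv_cancel₀ hf, hbr1] at this
      exact this
    rw [hc] at h0
    have h1 : f⁻¹ * (c * f * y) = c * y := by field_simp
    rw [h1] at h0
    have h2 : f * br f⁻¹ y = -(c * y) := by linear_combination -h0
    have h3 : br f⁻¹ y = f⁻¹ * (f * br f⁻¹ y) := by field_simp
    rw [h3, h2]; ring
  -- zpow rule
  have hzpow : ∀ (i : Fin (n + m)) (a : ℤ),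
      br (x i ^ a) y = ((a * Ω i j : ℤ) : K) * x i ^ a * y := by
    intro i a
    have hbase : br (x i) y = (Ω i j : K) * x i * y := by rw [hlog]
    obtain ⟨N, rfl | rfl⟩ := a.eq_nat_or_neg
    · rw [zpow_natCast, hpow (x i) _ hbase N]
      push_cast; ring
    · rw [zpow_neg, zpow_natCast,
        hinv (x i ^ N) (pow_ne_zero N (hx i)) _ (hpow (x i) _ hbase N)]
      push_cast; ring
  -- monomial rule
  have hmono : ∀ (a : Fin (n + m) → ℤ),
      br (∏ i, x i ^ a i) y =
        ((∑ i, a i * Ω i j : ℤ) : K) * (∏ i, x i ^ a i) * y := by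
    intro a
    classical
    induction (Finset.univ : Finset (Fin (n + m))) using Finset.induction with
    | empty => simp [hbr1]
    | insert i s hnotmem ih =>
        rw [Finset.prod_insert hnotmem, Finset.sum_insert hnotmem,
          hleibniz, ih, hzpow]
        push_cast
        ring
  -- the two monomials
  have hMp := hmono (fun i => if 0 < B k i then B k i else 0)
  have hMm := hmono (fun i => if B k i < 0 then -B k i else 0)
  set s : ℤ := ∑ i, (if 0 < B k i then B k i else 0) * Ω i j with hs
  have hsum : s = ∑ i, (if B k i < 0 then -B k i else 0) * Ω i j := by
    have h0 : (∑ i, B k i * Ω i j) = 0 := by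
      rw [hBΩ k j, if_neg hjk]
    have hdiff : s - (∑ i, (if B k i < 0 then -B k i else 0) * Ω i j)
        = ∑ i, B k i * Ω i j := by
      rw [hs, ← Finset.sum_sub_distrib]
      apply Finset.sum_congr rfl
      intro i _
      have h : (if 0 < B k i then B k i else 0)
          - (if B k i < 0 then -B k i else 0) = B k i := by
        split_ifs <;> omega
      rw [← sub_mul, h]
    omega
  set xk := x (Fin.castAdd m k) with hxk
  have hlhs : br (xk * x'k) y
      = xk * br x'k y + x'k * ((Ω (Fin.castAdd m k) j : K) * xk * y) := by
    rw [hleibniz, hlog]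
  have hrhs : br (xk * x'k) y = (s : K) * (xk * x'k) * y := by
    rw [hexch, hadd, hMp, hMm, ← hsum]
    push_cast
    ring
  refine ⟨s - Ω (Fin.castAdd m k) j, ?_⟩
  have hxk0 : xk ≠ 0 := hx _
  have key : xk * br x'k y
      = xk * (((s - Ω (Fin.castAdd m k) j : ℤ) : K) * x'k * y) := by
    push_cast
    rw [hlhs] at hrhs
    linear_combination hrhs
  exact mul_left_cancel₀ hxk0 key
end
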